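/- Assume α ≥ 0, c ≥ 0 and c̄ε < hp. Then the cubic polynomial P(k) = δk³ + (2εδ + λc̄/(r+δ))k² + (δε² + 2ελc̄/(r+δ))k + (ελ/(r+δ))(c̄ε − hp) has exactly one root in (0,∞). -/
import Mathlib


/-- Under `α ≥ 0`, `c ≥ 0` and `c̄ε < hp` (with `c̄ = hc + (r+δ)α`), the cubic polynomial
`P(k) = δk³ + (2εδ + λc̄/(r+δ))k² + (δε² + 2ελc̄/(r+δ))k + (ελ/(r+δ))(c̄ε - hp)`
has exactly one root in `(0,∞)` (the monopoly equilibrium capacity). -/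
theorem monopoly_cubic_unique_positive_root
    (r δ lam h p ε c α : ℝ)
    (hr : 0 < r) (hδ : 0 < δ) (hlam : 0 < lam) (hh : 0 < h) (hp : 0 < p) (hε : 0 < ε)
    (hα : 0 ≤ α) (hc : 0 ≤ c)
    (hce : (h * c + (r + δ) * α) * ε < h * p) :
    ∃! k : ℝ, 0 < k ∧
      δ * k ^ 3
        + (2 * ε * δ + lam * (h * c + (r + δ) * α) / (r + δ)) * k ^ 2
        + (δ * ε ^ 2 + 2 * ε * lam * (h * c + (r + δ) * α) / (r + δ)) * k
        + (ε * lam / (r + δ)) * ((h * c + (r + δ) * α) * ε - h * p) = 0 := by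
  have hrδ : 0 < r + δ := by linarith
  set cb := h * c + (r + δ) * α with hcbdef
  have hcb : 0 ≤ cb := by positivity
  set B := 2 * ε * δ + lam * cb / (r + δ) with hBdef
  set C := δ * ε ^ 2 + 2 * ε * lam * cb / (r + δ) with hCdef
  set D := ε * lam / (r + δ) * (cb * ε - h * p) with hDdef
  have hBpos : 0 < B := by
    have : 0 ≤ lam * cb / (r + δ) := by positivity
    have : 0 < 2 * ε * δ := by positivity
    rw [hBdef]; linarith
  have hCpos : 0 < C := by
    have : 0 ≤ 2 * ε * lam * cb / (r + δ) := by positivity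
    have : 0 < δ * ε ^ 2 := by positivity
    rw [hCdef]; linarith
  have hDneg : D < 0 := by
    rw [hDdef]
    apply mul_neg_of_pos_of_neg
    · positivity
    · linarith
  set f : ℝ → ℝ := fun k => δ * k ^ 3 + B * k ^ 2 + C * k + D with hf
  have hmono : StrictMonoOn f (Set.Ici (0 : ℝ)) := by
    intro a ha b hb hab
    simp only [hf]
    have ha0 : (0 : ℝ) ≤ a := ha
    have h1 : δ * a ^ 3 < δ * b ^ 3 := by
      have := pow_lt_pow_left₀ hab ha0 (n := 3) (by norm_num)
      exact mul_lt_mul_of_pos_left this hδ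
    have h2 : B * a ^ 2 ≤ B * b ^ 2 := by
      have := pow_le_pow_left₀ ha0 hab.le 2
      exact mul_le_mul_of_nonneg_left this hBpos.le
    have h3 : C * a < C * b := mul_lt_mul_of_pos_left hab hCpos
    linarith
  set M : ℝ := (1 - D) / C with hM
  have hMpos : 0 < M := by
    apply div_pos _ hCpos; linarith
  have hfM : 0 < f M := by
    have hCM : C * M = 1 - D := by
      rw [hM]; field_simp
    have h1 : 0 ≤ δ * M ^ 3 := by positivity
    have h2 : 0 ≤ B * M ^ 2 := by positivity
    simp only [hf]
    linarith
  have hf0 : f 0 = D := by simp [hf]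
  have hcont : ContinuousOn f (Set.Icc 0 M) := by
    apply Continuous.continuousOn; fun_prop
  have hsub := intermediate_value_Ioo (le_of_lt hMpos) hcont
  have h0mem : (0 : ℝ) ∈ Set.Ioo (f 0) (f M) := by
    rw [hf0]; exact ⟨hDneg, hfM⟩
  obtain ⟨k, hkmem, hfk⟩ := hsub h0mem
  refine ⟨k, ⟨hkmem.1, by simpa [hf] using hfk⟩, ?_⟩
  rintro y ⟨hy, hey⟩
  have hfy : f y = 0 := by simpa [hf] using hey
  exact hmono.injOn (Set.mem_Ici.2 hy.le) (Set.mem_Ici.2 hkmem.1.le) (by rw [hfy, hfk])
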